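/- Let d ≥ 1, let 𝒞 be a symmetric positive definite d×d real matrix with B = 𝒞^{-1/2}, let τ be a probability measure on the unit sphere 𝕊^{d-1} ⊂ ℝ^d, and let γ_𝒞 = N(0,𝒞) be the Gaussian measure on ℝ^d obtained as the pushforward of the standard Gaussian measure under 𝒞^{1/2}. For a unit vector ζ ∈ ℝ^d define g_ζ : ℝ^d → ℝ by g_ζ(x) = ⟨ζ, Bx⟩ - ∫_{𝕊^{d-1}} (⟨Bv, Bx⟩/‖Bv‖²)·⟨ζ, Bv⟩ dτ(v) (this is the image of the function f_ζ(x) = ⟨ζ, Bx⟩ under the generalized Hit-and-Run averaging operator for target γ_𝒞). Then for every unit vector ζ, ( ∫_{ℝ^d} g_ζ(x)² dγ_𝒞(x) )^{1/2} ≥ 1 - 3·∫_{𝕊^{d-1}} ⟨ζ, Bv/‖Bv‖⟩² dτ(v). -/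

import Mathlib

open MeasureTheory ProbabilityTheory
open scoped RealInnerProductSpace

/-- The standard Gaussian measure on `ℝ^d` (as Euclidean space). -/
noncomputable def stdGaussianE (d : ℕ) : Measure (EuclideanSpace ℝ (Fin d)) :=
  (Measure.pi fun _ : Fin d => gaussianReal 0 1).map
    (MeasurableEquiv.toLp 2 (Fin d → ℝ))

/-- The centered Gaussian measure `N(0,𝒞)` on `ℝ^d`, given as the pushforward of the
standard Gaussian measure under `𝒞^{1/2} = B⁻¹`, where `B = 𝒞^{-1/2}`. -/
noncomputable def gaussianOfInvSqrtCov {d : ℕ} (B : Matrix (Fin d) (Fin d) ℝ) :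
    Measure (EuclideanSpace ℝ (Fin d)) :=
  (stdGaussianE d).map (Matrix.toEuclideanLin B⁻¹)

open Real in
lemma gauss_exp_int : ∫ x : ℝ, Real.exp (-(x^2/2)) = Real.sqrt (2*Real.pi) := by
  have h : ∀ x : ℝ, -(x^2/2) = -(1/2:ℝ)*x^2 := fun x => by ring
  simp_rw [h, integral_gaussian]
  rw [mul_comm]
  norm_num

lemma gauss_sq_integrable : Integrable (fun x : ℝ => x^2 * Real.exp (-(x^2/2))) := by
  have h := integrable_rpow_mul_exp_neg_mul_sq (b := (1/2:ℝ)) (by norm_num) (s := 2) (by norm_num)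
  have he : (fun x : ℝ => x ^ (2:ℝ) * Real.exp (-(1/2:ℝ)*x^2))
      = fun x : ℝ => x^2 * Real.exp (-(x^2/2)) := by
    funext x
    rw [show ((2:ℝ)) = ((2:ℕ):ℝ) by norm_num, Real.rpow_natCast]
    ring_nf
  rwa [he] at h

lemma gauss_lin_integrable : Integrable (fun x : ℝ => x * Real.exp (-(x^2/2))) := by
  have h := integrable_mul_exp_neg_mul_sq (b := (1/2:ℝ)) (by norm_num)
  have he : (fun x : ℝ => x * Real.exp (-(1/2:ℝ)*x^2))
      = fun x : ℝ => x * Real.exp (-(x^2/2)) := by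
    funext x; ring_nf
  rwa [he] at h

lemma gauss_exp_integrable : Integrable (fun x : ℝ => Real.exp (-(x^2/2))) := by
  have h := integrable_exp_neg_mul_sq (b := (1/2:ℝ)) (by norm_num)
  have he : (fun x : ℝ => Real.exp (-(1/2:ℝ)*x^2))
      = fun x : ℝ => Real.exp (-(x^2/2)) := by
    funext x; ring_nf
  rwa [he] at h

lemma gauss_sq_int : ∫ x : ℝ, x^2 * Real.exp (-(x^2/2)) = Real.sqrt (2*Real.pi) := by
  have hu : ∀ x : ℝ, HasDerivAt (fun y : ℝ => y) 1 x := fun x => hasDerivAt_id x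
  have hv0 : ∀ x : ℝ, HasDerivAt (fun y : ℝ => -(y^2/2)) (-x) x := by
    intro x
    exact (((hasDerivAt_pow 2 x).div_const 2).neg).congr_deriv (by norm_num)
  have hv : ∀ x : ℝ, HasDerivAt (fun y : ℝ => -Real.exp (-(y^2/2)))
      (x * Real.exp (-(x^2/2))) x := by
    intro x
    have := ((hv0 x).exp).neg
    exact this.congr_deriv (by ring)
  have h1 : Integrable ((fun y : ℝ => y) * (fun x : ℝ => x * Real.exp (-(x^2/2)))) := by
    refine gauss_sq_integrable.congr ?_
    filter_upwards with x
    simp [Pi.mul_apply]; ring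
  have h2 : Integrable ((fun _ : ℝ => (1:ℝ)) * (fun y : ℝ => -Real.exp (-(y^2/2)))) := by
    refine gauss_exp_integrable.neg.congr ?_
    filter_upwards with x
    simp [Pi.mul_apply]
  have h3 : Integrable ((fun y : ℝ => y) * (fun y : ℝ => -Real.exp (-(y^2/2)))) := by
    refine gauss_lin_integrable.neg.congr ?_
    filter_upwards with x
    simp only [Pi.mul_apply, Pi.neg_apply]
    ring
  have key := MeasureTheory.integral_mul_deriv_eq_deriv_mul_of_integrable (fun x _ => hu x) (fun x _ => hv x) h1 h2 h3
  have e1 : ∫ x : ℝ, x * (x * Real.exp (-(x^2/2))) = ∫ x : ℝ, x^2 * Real.exp (-(x^2/2)) := by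
    congr 1; funext x; ring
  have e2 : ∫ x : ℝ, (1:ℝ) * (-Real.exp (-(x^2/2))) = - ∫ x : ℝ, Real.exp (-(x^2/2)) := by
    rw [← integral_neg]; congr 1; funext x; ring
  rw [e1, e2] at key
  rw [key, neg_neg, gauss_exp_int]

lemma gaussianReal_eq_withDensity : gaussianReal 0 1
    = MeasureTheory.volume.withDensity (fun x => ((gaussianPDFReal 0 1 x).toNNReal : ENNReal)) := by
  rw [gaussianReal_of_var_ne_zero 0 one_ne_zero]
  rfl

lemma gauss_integral_eq (g : ℝ → ℝ) :
    ∫ x, g x ∂gaussianReal 0 1 = ∫ x, gaussianPDFReal 0 1 x * g x := by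
  rw [gaussianReal_eq_withDensity,
    integral_withDensity_eq_integral_smul ((measurable_gaussianPDFReal 0 1).real_toNNReal)]
  congr 1; funext x
  simp [NNReal.smul_def, Real.coe_toNNReal _ (gaussianPDFReal_nonneg 0 1 x)]

lemma gauss_integrable_iff (g : ℝ → ℝ) :
    Integrable g (gaussianReal 0 1) ↔ Integrable (fun x => gaussianPDFReal 0 1 x * g x) := by
  rw [gaussianReal_eq_withDensity,
    integrable_withDensity_iff_integrable_smul ((measurable_gaussianPDFReal 0 1).real_toNNReal)]
  constructor <;> intro h <;> refine h.congr ?_ <;> filter_upwards with x <;>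
    simp [NNReal.smul_def, Real.coe_toNNReal _ (gaussianPDFReal_nonneg 0 1 x)]

lemma gaussianPDFReal_zero_one (x : ℝ) :
    gaussianPDFReal 0 1 x = (Real.sqrt (2*Real.pi))⁻¹ * Real.exp (-(x^2/2)) := by
  simp only [gaussianPDFReal, NNReal.coe_one, mul_one, sub_zero, neg_div]

lemma gauss_moment_two : ∫ x, x^2 ∂gaussianReal 0 1 = 1 := by
  rw [gauss_integral_eq]
  have : (fun x : ℝ => gaussianPDFReal 0 1 x * x^2)
      = fun x : ℝ => (Real.sqrt (2*Real.pi))⁻¹ * (x^2 * Real.exp (-(x^2/2))) := by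
    funext x; rw [gaussianPDFReal_zero_one]; ring
  rw [this, integral_const_mul, gauss_sq_int]
  rw [inv_mul_cancel₀]
  positivity

lemma gauss_moment_one : ∫ x, x ∂gaussianReal 0 1 = 0 := by
  rw [gauss_integral_eq]
  set F : ℝ → ℝ := fun x => gaussianPDFReal 0 1 x * x with hF
  have hodd : ∀ x, F (-x) = - F x := by
    intro x
    simp only [hF, gaussianPDFReal_zero_one]
    rw [show (-x)^2 = x^2 by ring]
    ring
  have h := MeasureTheory.integral_neg_eq_self F volume
  simp_rw [hodd] at h
  rw [integral_neg] at h
  linarith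

lemma gauss_integrable_sq : Integrable (fun x : ℝ => x^2) (gaussianReal 0 1) := by
  rw [gauss_integrable_iff]
  refine (gauss_sq_integrable.const_mul ((Real.sqrt (2*Real.pi))⁻¹)).congr ?_
  filter_upwards with x
  rw [gaussianPDFReal_zero_one]; ring

lemma gauss_integrable_id : Integrable (fun x : ℝ => x) (gaussianReal 0 1) := by
  rw [gauss_integrable_iff]
  refine (gauss_lin_integrable.const_mul ((Real.sqrt (2*Real.pi))⁻¹)).congr ?_
  filter_upwards with x
  rw [gaussianPDFReal_zero_one]; ring

section Pi
variable {d : ℕ}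

lemma pi_gauss_mul (i j : Fin d) :
    ∫ y : Fin d → ℝ, y i * y j ∂(Measure.pi fun _ => gaussianReal 0 1)
      = if i = j then 1 else 0 := by
  classical
  letI : MeasureSpace ℝ := ⟨gaussianReal 0 1⟩
  haveI : SigmaFinite (volume : Measure ℝ) := inferInstanceAs (SigmaFinite (gaussianReal 0 1))
  haveI : IsProbabilityMeasure (volume : Measure ℝ) :=
    inferInstanceAs (IsProbabilityMeasure (gaussianReal 0 1))
  have hpi : (Measure.pi fun _ : Fin d => gaussianReal 0 1)
      = (volume : Measure (Fin d → ℝ)) := (MeasureTheory.volume_pi).symm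
  rw [hpi]
  by_cases h : i = j
  · subst h
    rw [if_pos rfl]
    have hprod : ∀ y : Fin d → ℝ, y i * y i = ∏ k, (if k = i then (y k)^2 else 1) := by
      intro y; rw [Finset.prod_ite_eq' Finset.univ i (fun k => (y k)^2)]
      simp [sq]
    simp_rw [hprod]
    rw [MeasureTheory.integral_fintype_prod_volume_eq_prod
      (f := fun k (x : ℝ) => if k = i then x^2 else 1)]
    have hfac : ∀ k : Fin d, (∫ x : ℝ, if k = i then x^2 else 1)
        = if k = i then 1 else 1 := by
      intro k
      by_cases hk : k = i
      · simp only [if_pos hk]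
        exact gauss_moment_two
      · simp [if_neg hk]
    simp [hfac]
  · rw [if_neg h]
    have hprod : ∀ y : Fin d → ℝ, y i * y j
        = ∏ k, (if k = i ∨ k = j then y k else 1) := by
      intro y
      rw [Fintype.prod_eq_mul i j h (fun c hc => if_neg (by tauto))]
      simp
    simp_rw [hprod]
    rw [MeasureTheory.integral_fintype_prod_volume_eq_prod
      (f := fun k (x : ℝ) => if k = i ∨ k = j then x else 1)]
    rw [Fintype.prod_eq_mul i j h (fun c hc => by simp [hc.1, hc.2])]
    have h1 : (∫ x : ℝ, if i = i ∨ i = j then x else 1) = 0 := by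
      simp only [eq_self_iff_true, true_or, if_true]
      exact gauss_moment_one
    rw [h1, zero_mul]

lemma pi_gauss_mul_integrable (i j : Fin d) :
    Integrable (fun y : Fin d → ℝ => y i * y j) (Measure.pi fun _ => gaussianReal 0 1) := by
  classical
  letI : MeasureSpace ℝ := ⟨gaussianReal 0 1⟩
  haveI : SigmaFinite (volume : Measure ℝ) := inferInstanceAs (SigmaFinite (gaussianReal 0 1))
  haveI : IsProbabilityMeasure (volume : Measure ℝ) :=
    inferInstanceAs (IsProbabilityMeasure (gaussianReal 0 1))
  have hpi : (Measure.pi fun _ : Fin d => gaussianReal 0 1)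
      = (volume : Measure (Fin d → ℝ)) := (MeasureTheory.volume_pi).symm
  rw [hpi]
  by_cases h : i = j
  · subst h
    have := MeasureTheory.Integrable.fintype_prod (𝕜 := ℝ) (μ := fun _ => volume)
      (f := fun k (x : ℝ) => if k = i then x^2 else 1) (fun k => by
        by_cases hk : k = i
        · simp only [if_pos hk]; exact gauss_integrable_sq
        · simp [hk])
    refine this.congr ?_
    filter_upwards with y
    rw [Finset.prod_ite_eq' Finset.univ i (fun k => (y k)^2)]
    simp [sq]
  · have := MeasureTheory.Integrable.fintype_prod (𝕜 := ℝ) (μ := fun _ => volume)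
      (f := fun k (x : ℝ) => if k = i ∨ k = j then x else 1) (fun k => by
        by_cases hk : k = i ∨ k = j
        · simp only [if_pos hk]; exact gauss_integrable_id
        · simp [hk])
    refine this.congr ?_
    filter_upwards with y
    rw [Fintype.prod_eq_mul i j h (fun c hc => if_neg (by tauto))]
    simp

lemma pi_gauss_sum_sq (w : Fin d → ℝ) :
    ∫ y : Fin d → ℝ, (∑ i, w i * y i)^2 ∂(Measure.pi fun _ => gaussianReal 0 1)
      = ∑ i, (w i)^2 := by
  classical
  have hexp : ∀ y : Fin d → ℝ,
      (∑ i, w i * y i)^2 = ∑ i, ∑ j, (w i * w j) * (y i * y j) := by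
    intro y
    rw [sq, Finset.sum_mul_sum]
    exact Finset.sum_congr rfl fun i _ => Finset.sum_congr rfl fun j _ => by ring
  simp_rw [hexp]
  rw [integral_finset_sum _ (fun i _ => integrable_finset_sum _
    (fun j _ => (pi_gauss_mul_integrable i j).const_mul _))]
  have hinner : ∀ i : Fin d,
      (∫ y : Fin d → ℝ, ∑ j, (w i * w j) * (y i * y j)
        ∂(Measure.pi fun _ => gaussianReal 0 1)) = (w i)^2 := by
    intro i
    rw [integral_finset_sum _ (fun j _ => (pi_gauss_mul_integrable i j).const_mul _)]
    have : ∀ j : Fin d, (∫ y : Fin d → ℝ, (w i * w j) * (y i * y j)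
        ∂(Measure.pi fun _ => gaussianReal 0 1))
        = (w i * w j) * (if i = j then 1 else 0) := by
      intro j
      rw [MeasureTheory.integral_const_mul, pi_gauss_mul]
    simp_rw [this]
    simp [Finset.sum_ite_eq, mul_ite, sq]
  exact Finset.sum_congr rfl fun i _ => hinner i

end Pi

open scoped RealInnerProductSpace

lemma stdGauss_inner_sq {d : ℕ} (w : EuclideanSpace ℝ (Fin d)) :
    ∫ z, (⟪w, z⟫)^2 ∂stdGaussianE d = ‖w‖^2 := by
  rw [stdGaussianE, integral_map (MeasurableEquiv.measurable _).aemeasurable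
    ((continuous_const.inner continuous_id).pow 2).aestronglyMeasurable]
  have hco : ∀ y : Fin d → ℝ,
      (⟪w, (MeasurableEquiv.toLp 2 (Fin d → ℝ)) y⟫ : ℝ) = ∑ i, w i * y i := by
    intro y
    simp only [PiLp.inner_apply, RCLike.inner_apply, conj_trivial]
    exact Finset.sum_congr rfl fun i _ => mul_comm _ _
  simp_rw [hco, pi_gauss_sum_sq]
  rw [EuclideanSpace.norm_eq, Real.sq_sqrt (by positivity)]
  exact (Finset.sum_congr rfl fun i _ => by rw [Real.norm_eq_abs, sq_abs]).symm


/-- sharpness of the Wasserstein contraction rate: lower bound on the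
`L²(γ_𝒞)`-norm of the generalized Hit-and-Run averaging operator applied to the linear
test function `f_ζ(x) = ⟨ζ, Bx⟩`. -/
theorem averaging_operator_lower_bound {d : ℕ} (hd : 1 ≤ d)
    (C B : Matrix (Fin d) (Fin d) ℝ) (hC : C.PosDef) (hB : B.PosDef)
    (hBC : B * B = C⁻¹)
    (τ : Measure (Metric.sphere (0 : EuclideanSpace ℝ (Fin d)) 1))
    [IsProbabilityMeasure τ]
    (ζ : EuclideanSpace ℝ (Fin d)) (hζ : ‖ζ‖ = 1)
    (g : EuclideanSpace ℝ (Fin d) → ℝ)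
    (hg : ∀ x, g x = ⟪ζ, Matrix.toEuclideanLin B x⟫ -
      ∫ v, (⟪Matrix.toEuclideanLin B ↑v, Matrix.toEuclideanLin B x⟫ /
          ‖Matrix.toEuclideanLin B ↑v‖ ^ 2) * ⟪ζ, Matrix.toEuclideanLin B ↑v⟫ ∂τ) :
    Real.sqrt (∫ x, g x ^ 2 ∂gaussianOfInvSqrtCov B) ≥
      1 - 3 * ∫ v, ⟪ζ, ‖Matrix.toEuclideanLin B ↑v‖⁻¹ •
        Matrix.toEuclideanLin B ↑v⟫ ^ 2 ∂τ := by
  classical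
  have hBdet : IsUnit B.det := isUnit_iff_ne_zero.mpr (ne_of_gt hB.det_pos)
  have hBB' : B * B⁻¹ = 1 := Matrix.mul_nonsing_inv B hBdet
  have hBB : B⁻¹ * B = 1 := Matrix.nonsing_inv_mul B hBdet
  have hcomp : ∀ z : EuclideanSpace ℝ (Fin d),
      Matrix.toEuclideanLin B (Matrix.toEuclideanLin B⁻¹ z) = z := by
    intro z
    simp [Matrix.toEuclideanLin_apply, Matrix.mulVec_mulVec, hBB', Matrix.one_mulVec]
  have hcomp' : ∀ z : EuclideanSpace ℝ (Fin d),
      Matrix.toEuclideanLin B⁻¹ (Matrix.toEuclideanLin B z) = z := by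
    intro z
    simp [Matrix.toEuclideanLin_apply, Matrix.mulVec_mulVec, hBB, Matrix.one_mulVec]
  have hBcont : Continuous (fun x : EuclideanSpace ℝ (Fin d) => Matrix.toEuclideanLin B x) :=
    (Matrix.toEuclideanLin B).continuous_of_finiteDimensional
  have hBicont : Continuous (fun x : EuclideanSpace ℝ (Fin d) => Matrix.toEuclideanLin B⁻¹ x) :=
    (Matrix.toEuclideanLin B⁻¹).continuous_of_finiteDimensional
  have hBne : ∀ v : Metric.sphere (0 : EuclideanSpace ℝ (Fin d)) 1,
      Matrix.toEuclideanLin B (↑v) ≠ (0 : EuclideanSpace ℝ (Fin d)) := by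
    intro v hv0
    have hv1 : ‖(↑v : EuclideanSpace ℝ (Fin d))‖ = 1 := by
      have h2 := v.2
      rwa [mem_sphere_iff_norm, sub_zero] at h2
    have hz : (↑v : EuclideanSpace ℝ (Fin d)) = 0 := by
      have h3 := congrArg (Matrix.toEuclideanLin B⁻¹) hv0
      rwa [hcomp', map_zero] at h3
    rw [hz, norm_zero] at hv1
    exact zero_ne_one hv1
  set u : Metric.sphere (0 : EuclideanSpace ℝ (Fin d)) 1 → EuclideanSpace ℝ (Fin d) :=
    fun v => ((⟪ζ, Matrix.toEuclideanLin B ↑v⟫ : ℝ) / ‖Matrix.toEuclideanLin B ↑v‖^2)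
      • Matrix.toEuclideanLin B ↑v with hu
  have hucont : Continuous u := by
    have h1 : Continuous fun v : Metric.sphere (0 : EuclideanSpace ℝ (Fin d)) 1 =>
        Matrix.toEuclideanLin B ↑v := hBcont.comp continuous_subtype_val
    exact ((continuous_const.inner h1).div (h1.norm.pow 2)
      (fun v => pow_ne_zero 2 (norm_ne_zero_iff.mpr (hBne v)))).smul h1
  have hubound : ∀ v, ‖u v‖ ≤ 1 := by
    intro v
    have hn : 0 < ‖Matrix.toEuclideanLin B ↑v‖ := norm_pos_iff.mpr (hBne v)
    have hi : |(⟪ζ, Matrix.toEuclideanLin B ↑v⟫ : ℝ)| ≤ ‖Matrix.toEuclideanLin B ↑v‖ := by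
      have h4 := abs_real_inner_le_norm ζ (Matrix.toEuclideanLin B ↑v)
      rwa [hζ, one_mul] at h4
    simp only [hu]
    rw [norm_smul, Real.norm_eq_abs, abs_div,
      abs_of_nonneg (by positivity : (0:ℝ) ≤ ‖Matrix.toEuclideanLin B ↑v‖^2),
      div_mul_eq_mul_div, div_le_one (by positivity)]
    nlinarith [abs_nonneg (⟪ζ, Matrix.toEuclideanLin B ↑v⟫ : ℝ)]
  have huint : Integrable u τ :=
    ⟨hucont.aestronglyMeasurable,
      HasFiniteIntegral.of_bounded (C := 1) (Filter.Eventually.of_forall hubound)⟩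
  set m : EuclideanSpace ℝ (Fin d) := ∫ v, u v ∂τ with hm
  have hJpt : ∀ v : Metric.sphere (0 : EuclideanSpace ℝ (Fin d)) 1, (⟪ζ, ‖Matrix.toEuclideanLin B ↑v‖⁻¹ • Matrix.toEuclideanLin B ↑v⟫ : ℝ)^2
      = ⟪ζ, u v⟫ := by
    intro v
    have hn : (‖Matrix.toEuclideanLin B ↑v‖ : ℝ) ≠ 0 := norm_ne_zero_iff.mpr (hBne v)
    simp only [hu]
    rw [real_inner_smul_right, real_inner_smul_right]
    field_simp
  have hJ : (∫ v : Metric.sphere (0 : EuclideanSpace ℝ (Fin d)) 1, (⟪ζ, ‖Matrix.toEuclideanLin B ↑v‖⁻¹ • Matrix.toEuclideanLin B ↑v⟫ : ℝ)^2 ∂τ)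
      = ⟪ζ, m⟫ := by
    rw [integral_congr_ae (Filter.Eventually.of_forall hJpt)]
    exact integral_inner huint ζ
  have hJnn : (0:ℝ) ≤ ∫ v : Metric.sphere (0 : EuclideanSpace ℝ (Fin d)) 1, (⟪ζ, ‖Matrix.toEuclideanLin B ↑v‖⁻¹ •
      Matrix.toEuclideanLin B ↑v⟫ : ℝ)^2 ∂τ := integral_nonneg fun v => sq_nonneg _
  set w : EuclideanSpace ℝ (Fin d) := ζ - m with hw
  have hgf : ∀ x, g x = ⟪w, Matrix.toEuclideanLin B x⟫ := by
    intro x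
    rw [hg x]
    have hpt : ∀ v : Metric.sphere (0 : EuclideanSpace ℝ (Fin d)) 1,
        ((⟪Matrix.toEuclideanLin B ↑v, Matrix.toEuclideanLin B x⟫ : ℝ) /
          ‖Matrix.toEuclideanLin B ↑v‖^2) * ⟪ζ, Matrix.toEuclideanLin B ↑v⟫
        = ⟪Matrix.toEuclideanLin B x, u v⟫ := by
      intro v
      simp only [hu]
      rw [real_inner_smul_right,
        real_inner_comm (Matrix.toEuclideanLin B ↑v) (Matrix.toEuclideanLin B x)]
      ring
    rw [integral_congr_ae (Filter.Eventually.of_forall hpt),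
      integral_inner huint (Matrix.toEuclideanLin B x), hw, inner_sub_left,
      real_inner_comm (Matrix.toEuclideanLin B x) m]
  have hmain : ∫ x, g x ^2 ∂gaussianOfInvSqrtCov B = ‖w‖^2 := by
    have hgfun : g = fun x => (⟪w, Matrix.toEuclideanLin B x⟫ : ℝ) := funext hgf
    rw [hgfun, gaussianOfInvSqrtCov]
    rw [integral_map hBicont.measurable.aemeasurable
      ((continuous_const.inner hBcont).pow 2).aestronglyMeasurable]
    simp_rw [hcomp]
    exact stdGauss_inner_sq w
  rw [ge_iff_le, hmain, Real.sqrt_sq (norm_nonneg w)]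
  have hlow : 1 - ⟪ζ, m⟫ ≤ ‖w‖ := by
    have h1 : (⟪ζ, w⟫ : ℝ) ≤ ‖ζ‖ * ‖w‖ := real_inner_le_norm ζ w
    have h2 : (⟪ζ, w⟫ : ℝ) = 1 - ⟪ζ, m⟫ := by
      rw [hw, inner_sub_right, real_inner_self_eq_norm_sq, hζ]
      norm_num
    rw [hζ, one_mul] at h1
    linarith
  linarith [hJnn, hJ]
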